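/- Functional progress of the composite step: let f : E → ℝ be twice continuously differentiable with L-Lipschitz-continuous Hessian (L > 0), ψ : E → ℝ convex, x ∈ E, s a subgradient of ψ at x, H a symmetric positive semidefinite linear map with ‖H − ∇²f(x)‖ ≤ β for some β ≥ 0, and let α ≥ √(L‖∇f(x) + s‖/3) + β with α > 0. If x⁺ is a composite step from x with parameters (H, α) and r := ‖x⁺ − x‖, then F(x) − F(x⁺) ≥ (α/2)·r², where F := f + ψ. -/

import Mathlib

open scoped RealInnerProductSpace
open Real Set

def IsSymmPSD {n : ℕ} (H : EuclideanSpace ℝ (Fin n) →L[ℝ] EuclideanSpace ℝ (Fin n)) : Prop :=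
  (∀ u v, ⟪H u, v⟫ = ⟪u, H v⟫) ∧ ∀ u, 0 ≤ ⟪H u, u⟫

def IsSubgradAt {n : ℕ} (ψ : EuclideanSpace ℝ (Fin n) → ℝ)
    (s x : EuclideanSpace ℝ (Fin n)) : Prop :=
  ∀ y, ψ x + ⟪s, y - x⟫ ≤ ψ y

def CompositeStep {n : ℕ} (g : EuclideanSpace ℝ (Fin n))
    (H : EuclideanSpace ℝ (Fin n) →L[ℝ] EuclideanSpace ℝ (Fin n)) (α : ℝ)
    (ψ : EuclideanSpace ℝ (Fin n) → ℝ) (x xp : EuclideanSpace ℝ (Fin n)) : Prop :=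
  ∀ y, ψ xp ≤ ⟪g + (H (xp - x) + α • (xp - x)), y - xp⟫ + ψ y

/-- The Hessian of `f` at `x`, as the derivative of the gradient map. -/
noncomputable def hess {n : ℕ} (f : EuclideanSpace ℝ (Fin n) → ℝ)
    (x : EuclideanSpace ℝ (Fin n)) :
    EuclideanSpace ℝ (Fin n) →L[ℝ] EuclideanSpace ℝ (Fin n) :=
  fderiv ℝ (gradient f) x


open InnerProductSpace in
lemma grad_contDiff {n : ℕ} (f : EuclideanSpace ℝ (Fin n) → ℝ) (hf : ContDiff ℝ 2 f) :
    ContDiff ℝ 1 (gradient f) := by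
  have h1 : ContDiff ℝ 1 (fderiv ℝ f) := hf.fderiv_right (by norm_num)
  exact (toDual ℝ (EuclideanSpace ℝ (Fin n))).symm.contDiff.comp h1


open InnerProductSpace in
lemma grad_bound {n : ℕ} (f : EuclideanSpace ℝ (Fin n) → ℝ) (hf : ContDiff ℝ 2 f)
    (L : ℝ) (hL : 0 ≤ L) (hLip : ∀ x y, ‖hess f x - hess f y‖ ≤ L * ‖x - y‖)
    (x h : EuclideanSpace ℝ (Fin n)) (t : ℝ) (ht : t ∈ Icc (0:ℝ) 1) :
    ‖gradient f (x + t • h) - gradient f x - t • (hess f x h)‖ ≤ L / 2 * t ^ 2 * ‖h‖ ^ 2 := by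
  have hG : ContDiff ℝ 1 (gradient f) := grad_contDiff f hf
  have hGd : Differentiable ℝ (gradient f) := hG.differentiable one_ne_zero
  set γ : ℝ → EuclideanSpace ℝ (Fin n) := fun u => gradient f (x + u • h) - u • (hess f x h)
    with hγ
  have hcurve : ∀ u : ℝ, HasDerivAt (fun u : ℝ => x + u • h) h u := by
    intro u
    simpa using ((hasDerivAt_id u).smul_const h).const_add x
  have hγ' : ∀ u : ℝ, HasDerivAt γ (hess f (x + u • h) h - hess f x h) u := by
    intro u
    have h1 : HasFDerivAt (gradient f) (hess f (x + u • h)) (x + u • h) :=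
      (hGd (x + u • h)).hasFDerivAt
    have h2 : HasDerivAt (fun u : ℝ => u • (hess f x h)) (hess f x h) u := by
      simpa using (hasDerivAt_id u).smul_const (hess f x h)
    exact (h1.comp_hasDerivAt u (hcurve u)).sub h2
  have hcont : Continuous fun u : ℝ => hess f (x + u • h) h - hess f x h := by
    have : Continuous (hess f) := hG.continuous_fderiv one_ne_zero
    exact ((this.comp (continuous_const.add (continuous_id.smul continuous_const))).clm_apply continuous_const).sub continuous_const
  have hint : γ t - γ 0 = ∫ u in (0:ℝ)..t, (hess f (x + u • h) h - hess f x h) := by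
    rw [intervalIntegral.integral_eq_sub_of_hasDerivAt (fun u _ => hγ' u)
      (hcont.intervalIntegrable 0 t)]
  have hnorm : ∀ u ∈ Icc (0:ℝ) t, ‖hess f (x + u • h) h - hess f x h‖ ≤ (L * ‖h‖ ^ 2) * u := by
    intro u hu
    have : hess f (x + u • h) h - hess f x h = (hess f (x + u • h) - hess f x) h := rfl
    rw [this]
    calc ‖(hess f (x + u • h) - hess f x) h‖ ≤ ‖hess f (x + u • h) - hess f x‖ * ‖h‖ :=
          ContinuousLinearMap.le_opNorm _ _
      _ ≤ (L * ‖(x + u • h) - x‖) * ‖h‖ := by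
          gcongr; exact hLip _ _
      _ = (L * ‖h‖ ^ 2) * u := by
          rw [add_sub_cancel_left, norm_smul, Real.norm_eq_abs, abs_of_nonneg hu.1]; ring
  have key : ‖γ t - γ 0‖ ≤ (L * ‖h‖ ^ 2) * (t ^ 2 / 2) := by
    rw [hint]
    calc ‖∫ u in (0:ℝ)..t, (hess f (x + u • h) h - hess f x h)‖
        ≤ ∫ u in (0:ℝ)..t, ‖hess f (x + u • h) h - hess f x h‖ :=
          intervalIntegral.norm_integral_le_integral_norm ht.1
      _ ≤ ∫ u in (0:ℝ)..t, (L * ‖h‖^2) * u := by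
          apply intervalIntegral.integral_mono_on ht.1
          · exact (hcont.norm).intervalIntegrable 0 t
          · exact (continuous_const.mul continuous_id).intervalIntegrable 0 t
          · intro u hu; exact hnorm u hu
      _ = (L * ‖h‖^2) * (t^2/2) := by
          rw [intervalIntegral.integral_const_mul, integral_id]; ring_nf
  have : γ t - γ 0 = gradient f (x + t • h) - gradient f x - t • hess f x h := by
    simp [hγ]; abel
  rw [this] at key
  calc ‖_‖ ≤ (L * ‖h‖^2) * (t^2/2) := key
    _ = L / 2 * t ^ 2 * ‖h‖ ^ 2 := by ring

open InnerProductSpace in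
lemma grad_inner {n : ℕ} (f : EuclideanSpace ℝ (Fin n) → ℝ) (y v : EuclideanSpace ℝ (Fin n)) :
    ⟪gradient f y, v⟫ = fderiv ℝ f y v := by
  rw [gradient, ← toDual_apply_apply, LinearIsometryEquiv.apply_symm_apply]


open InnerProductSpace in
lemma taylor2 {n : ℕ} (f : EuclideanSpace ℝ (Fin n) → ℝ) (hf : ContDiff ℝ 2 f)
    (L : ℝ) (hL : 0 ≤ L) (hLip : ∀ x y, ‖hess f x - hess f y‖ ≤ L * ‖x - y‖)
    (x h : EuclideanSpace ℝ (Fin n)) :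
    f (x + h) ≤ f x + ⟪gradient f x, h⟫ + 1/2 * ⟪hess f x h, h⟫ + L/6 * ‖h‖^3 := by
  have hfd : Differentiable ℝ f := hf.differentiable (by norm_num)
  have hG : ContDiff ℝ 1 (gradient f) := by
    have h1 : ContDiff ℝ 1 (fderiv ℝ f) := hf.fderiv_right (by norm_num)
    exact (toDual ℝ (EuclideanSpace ℝ (Fin n))).symm.contDiff.comp h1
  have hcurve : ∀ u : ℝ, HasDerivAt (fun u : ℝ => x + u • h) h u := fun u => by
    simpa using ((hasDerivAt_id u).smul_const h).const_add x
  have hφ' : ∀ t : ℝ, HasDerivAt (fun t : ℝ => f (x + t • h)) (⟪gradient f (x + t • h), h⟫) t := by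
    intro t
    have := ((hfd (x + t • h)).hasFDerivAt).comp_hasDerivAt t (hcurve t)
    rwa [grad_inner]
  have hcont : Continuous fun t : ℝ => ⟪gradient f (x + t • h), h⟫ := by
    exact ((hG.continuous.comp (continuous_const.add
      (continuous_id.smul continuous_const))).inner continuous_const)
  have hint : f (x + h) - f x = ∫ t in (0:ℝ)..1, ⟪gradient f (x + t • h), h⟫ := by
    rw [intervalIntegral.integral_eq_sub_of_hasDerivAt (fun t _ => hφ' t)
      (hcont.intervalIntegrable 0 1)]
    simp
  have hbound : ∀ t ∈ Icc (0:ℝ) 1,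
      ⟪gradient f (x + t • h), h⟫ - ⟪gradient f x, h⟫ - t * ⟪hess f x h, h⟫
        ≤ (L/2 * ‖h‖^3) * t^2 := by
    intro t ht
    have e : ⟪gradient f (x + t • h), h⟫ - ⟪gradient f x, h⟫ - t * ⟪hess f x h, h⟫
        = ⟪gradient f (x + t • h) - gradient f x - t • hess f x h, h⟫ := by
      rw [inner_sub_left, inner_sub_left, real_inner_smul_left]
    rw [e]
    calc ⟪gradient f (x + t • h) - gradient f x - t • hess f x h, h⟫
        ≤ ‖gradient f (x + t • h) - gradient f x - t • hess f x h‖ * ‖h‖ :=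
          real_inner_le_norm _ _
      _ ≤ (L / 2 * t ^ 2 * ‖h‖ ^ 2) * ‖h‖ := by
          gcongr; exact grad_bound f hf L hL hLip x h t ht
      _ = (L/2 * ‖h‖^3) * t^2 := by ring
  have hintc : IntervalIntegrable (fun t : ℝ => ⟪gradient f (x + t • h), h⟫) MeasureTheory.volume 0 1 :=
    hcont.intervalIntegrable 0 1
  have key : ∫ t in (0:ℝ)..1, ⟪gradient f (x + t • h), h⟫
      ≤ ∫ t in (0:ℝ)..1, (⟪gradient f x, h⟫ + t * ⟪hess f x h, h⟫ + (L/2 * ‖h‖^3) * t^2) := by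
    apply intervalIntegral.integral_mono_on (by norm_num) hintc
    · exact ((continuous_const.add (continuous_id.mul continuous_const)).add
        (continuous_const.mul (continuous_pow 2))).intervalIntegrable 0 1
    · intro t ht; linarith [hbound t ht]
  have hval : ∫ t in (0:ℝ)..1, (⟪gradient f x, h⟫ + t * ⟪hess f x h, h⟫ + (L/2 * ‖h‖^3) * t^2)
      = ⟪gradient f x, h⟫ + 1/2 * ⟪hess f x h, h⟫ + L/6 * ‖h‖^3 := by
    rw [intervalIntegral.integral_add, intervalIntegral.integral_add]
    · rw [intervalIntegral.integral_const, intervalIntegral.integral_mul_const,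
        intervalIntegral.integral_const_mul, integral_id]
      have : ∫ t in (0:ℝ)..1, t^2 = 1/3 := by
        rw [integral_pow]; norm_num
      rw [this]; simp; ring
    · exact intervalIntegrable_const
    · exact (continuous_id.mul continuous_const).intervalIntegrable 0 1
    · exact (continuous_const.add
        (continuous_id.mul continuous_const)).intervalIntegrable 0 1
    · exact (continuous_const.mul (continuous_pow 2)).intervalIntegrable 0 1
  linarith [hint, key, hval]

/-- Functional progress of the composite step: if `f` has `L`-Lipschitz Hessian,
`‖H − ∇²f(x)‖ ≤ β` and `α ≥ √(L‖∇f(x) + s‖/3) + β`, then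
`F(x) − F(x⁺) ≥ (α/2)·‖x⁺ − x‖²` for `F = f + ψ`. -/
theorem composite_step_functional_progress {n : ℕ}
    (f : EuclideanSpace ℝ (Fin n) → ℝ) (hf : ContDiff ℝ 2 f)
    (L : ℝ) (hL : 0 < L)
    (hLip : ∀ x y, ‖hess f x - hess f y‖ ≤ L * ‖x - y‖)
    (ψ : EuclideanSpace ℝ (Fin n) → ℝ) (hψ : ConvexOn ℝ Set.univ ψ)
    (x xp s : EuclideanSpace ℝ (Fin n)) (hs : IsSubgradAt ψ s x)
    (H : EuclideanSpace ℝ (Fin n) →L[ℝ] EuclideanSpace ℝ (Fin n)) (hH : IsSymmPSD H)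
    (β : ℝ) (hβ : 0 ≤ β) (hHerr : ‖H - hess f x‖ ≤ β)
    (α : ℝ) (hαpos : 0 < α)
    (hα : Real.sqrt (L * ‖gradient f x + s‖ / 3) + β ≤ α)
    (hstep : CompositeStep (gradient f x) H α ψ x xp) :
    α / 2 * ‖xp - x‖ ^ 2 ≤ (f x + ψ x) - (f xp + ψ xp) := by
  set h := xp - x with hh
  set g := gradient f x with hg
  set r := ‖h‖ with hr
  have hr0 : 0 ≤ r := norm_nonneg _
  -- step inequality at y = x
  have h1 := hstep x
  have e1 : ⟪g + (H h + α • h), x - xp⟫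
      = -(⟪g, h⟫ + ⟪H h, h⟫ + α * r ^ 2) := by
    have hx : x - xp = -h := by rw [hh]; abel
    rw [hx, inner_neg_right, inner_add_left, inner_add_left, real_inner_smul_left,
      real_inner_self_eq_norm_sq]
    ring
  rw [e1] at h1
  -- subgradient at x evaluated at xp
  have h2 := hs xp
  -- ψ x - ψ xp ≥ ⟪g,h⟫ + ⟪Hh,h⟫ + α r²
  have hpsi : ⟪g, h⟫ + ⟪H h, h⟫ + α * r ^ 2 ≤ ψ x - ψ xp := by linarith
  -- bound α r² ≤ ‖g+s‖ r
  have hHpsd : 0 ≤ ⟪H h, h⟫ := hH.2 h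
  have hcs : -⟪g + s, h⟫ ≤ ‖g + s‖ * r := by
    have := real_inner_le_norm (g + s) (-h)
    rwa [inner_neg_right, norm_neg] at this
  have hgs : α * r ^ 2 ≤ ‖g + s‖ * r := by
    have : ⟪g + s, h⟫ = ⟪g, h⟫ + ⟪s, h⟫ := inner_add_left _ _ _
    linarith
  -- Taylor bound
  have htay : f xp ≤ f x + ⟪g, h⟫ + 1/2 * ⟪hess f x h, h⟫ + L/6 * r^3 := by
    have := taylor2 f hf L hL.le hLip x h
    rwa [hh, add_sub_cancel] at this
  -- hessian error
  have herr : ⟪hess f x h, h⟫ ≤ ⟪H h, h⟫ + β * r ^ 2 := by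
    have e2 : ⟪hess f x h, h⟫ - ⟪H h, h⟫ = ⟪(hess f x - H) h, h⟫ := by
      rw [ContinuousLinearMap.sub_apply, inner_sub_left]
    have e3 : ⟪(hess f x - H) h, h⟫ ≤ β * r ^ 2 := by
      calc ⟪(hess f x - H) h, h⟫ ≤ ‖(hess f x - H) h‖ * r := real_inner_le_norm _ _
        _ ≤ (‖hess f x - H‖ * r) * r := by gcongr; exact ContinuousLinearMap.le_opNorm _ _
        _ ≤ (β * r) * r := by gcongr; rw [norm_sub_rev]; exact hHerr
        _ = β * r ^ 2 := by ring
    linarith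
  -- scalar endgame: L r² / 3 ≤ (α - β) r
  set N := ‖g + s‖ with hN
  have hN0 : 0 ≤ N := norm_nonneg _
  set σ := Real.sqrt (L * N / 3) with hσ
  have hσ0 : 0 ≤ σ := Real.sqrt_nonneg _
  have hσsq : σ ^ 2 = L * N / 3 := Real.sq_sqrt (by positivity)
  have hαβ : σ ≤ α - β := by linarith
  have hkey : L * N / 3 ≤ α * (α - β) := by
    have h4 : σ * σ ≤ α * (α - β) := mul_le_mul (by linarith) hαβ hσ0 hαpos.le
    rw [pow_two] at hσsq; linarith
  have hlr : L * r ^ 2 / 3 ≤ (α - β) * r := by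
    have h5 : L / 3 * (α * r ^ 2) ≤ L / 3 * (N * r) :=
      mul_le_mul_of_nonneg_left hgs (by positivity)
    have h6 : L * N / 3 * r ≤ α * (α - β) * r := mul_le_mul_of_nonneg_right hkey hr0
    have h7 : α * (L * r ^ 2 / 3) ≤ α * ((α - β) * r) := by nlinarith [h5, h6]
    exact le_of_mul_le_mul_left h7 hαpos
  have hcube : L / 6 * r ^ 3 ≤ (α - β) / 2 * r ^ 2 := by
    have h8 := mul_le_mul_of_nonneg_right hlr hr0
    ring_nf at h8 ⊢
    linarith
  linarith
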